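/- arXiv:1902.10638 — 2 statements merged into one kernel-verified Lean document; each statement's English description precedes it below -/
import Mathlib

section
/- Suppose j : V → M is a (κ,λ)-extender embedding (every element of M has the form j(f)(α) for some function f with domain κ in V and some ordinal α < λ) and 2^κ ≥ λ. Then the factor map k : N → M from the normal-measure ultrapower N derived from j is surjective, hence an isomorphism, and so j equals the ultrapower embedding by a normal measure on κ. -/
open Cardinal Ordinal

/-!
STATEMENT 1.  Suppose `j : V → M` is a `(κ,λ)`-extender embedding (every element of `M`
has the form `j(f)(α)` for a function `f` with domain `κ` in `V` and an ordinal `α < λ`)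
and `2^κ ≥ λ`.  Then the factor map `k : N → M` from the normal-measure ultrapower `N`
derived from `j` is surjective, hence an isomorphism, and so `j` equals the ultrapower
embedding by a normal measure on `κ`.

Encoding: `Vt`, `Mt`, `Nt` are the (underlying classes of the) three models; `oM`, `oN`
are the ordinals as computed by `M` and `N`; `apM`, `apN` are internal function
application; `powN` is `(2^κ)^N`.  The fields record the standard facts used: `k` is
elementary (injective, commutes with application, `k ∘ i = j`), `(2^κ)^N ≥ 2^κ` as
ordinals, and (the factor-map lemma) `crit k > (2^κ)^N`, i.e. `k` fixes all ordinals
`≤ powN`.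
-/
structure ExtenderFactor (κ lam : Cardinal) where
  Vt : Type 2
  Mt : Type 2
  Nt : Type 2
  j : Vt → Mt
  i : Vt → Nt
  k : Nt → Mt
  k_inj : Function.Injective k
  factor : ∀ x, k (i x) = j x
  oM : Ordinal → Mt
  oN : Ordinal → Nt
  apM : Mt → Mt → Mt
  apN : Nt → Nt → Nt
  k_ap : ∀ a b, k (apN a b) = apM (k a) (k b)
  /-- the ordinal `(2^κ)^N` -/
  powN : Ordinal
  /-- `N` contains every subset of `κ`, so `(2^κ)^N ≥ 2^κ` as ordinals -/
  powN_ge : ((2 : Cardinal) ^ κ).ord ≤ powN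
  /-- the factor-map lemma: `crit k > (2^κ)^N` -/
  k_fix : ∀ α ≤ powN, k (oN α) = oM α
  /-- `j` is a `(κ,λ)`-extender embedding: every element of `M` is `j(f)(α)`
      for some function `f` with domain `κ` in `V` and some `α < λ` -/
  extender : ∀ x : Mt, ∃ f : Vt, ∃ α < lam.ord, x = apM (j f) (oM α)

theorem extender_embedding_with_large_continuum_is_ultrapower
    (κ lam : Cardinal) (h2 : lam ≤ 2 ^ κ) (E : ExtenderFactor κ lam) :
    Function.Surjective E.k ∧ Function.Bijective E.k ∧
      ∃ e : E.Nt ≃ E.Mt, ∀ x, E.j x = e (E.i x) := by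
  have hsurj : Function.Surjective E.k := by
    intro x
    obtain ⟨f, α, hα, hx⟩ := E.extender x
    have hαp : α ≤ E.powN :=
      le_of_lt (lt_of_lt_of_le hα (le_trans (Cardinal.ord_le_ord.mpr h2) E.powN_ge))
    exact ⟨E.apN (E.i f) (E.oN α), by
      rw [E.k_ap, E.factor, E.k_fix α hαp, hx]⟩
  have hbij : Function.Bijective E.k := ⟨E.k_inj, hsurj⟩
  exact ⟨hsurj, hbij, Equiv.ofBijective E.k hbij, fun x => (E.factor x).symm⟩
end

section
/- If the poset Add(γ,δ) of partial functions p : δ×γ → 2 with |p| < γ is γ⁺-Knaster and any two uniform conditions of equal height with compatible working parts are compatible in A(γ,δ,X⃗), then the property of being γ⁺-Knaster transfers from Add(γ,δ) to A(γ,δ,X⃗) when all conditions are normalized to a common height. -/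
open Cardinal Ordinal

/-- `X` is a ladder system on `I`: for each `α ∈ I`, `X α` is a cofinal subset of `α`. -/
def IsLadderSystem (I : Set Ordinal) (X : Ordinal → Set Ordinal) : Prop :=
  ∀ α ∈ I, X α ⊆ Set.Iio α ∧ ∀ β < α, ∃ ξ ∈ X α, β < ξ

/-- A condition of the Cohen forcing `Add(γ,δ)`: a partial function `δ × γ → 2`
of size `< γ`. -/
structure AddCond (γ δ : Cardinal.{0}) where
  p : Set (Ordinal.{0} × Ordinal.{0} × Bool)
  functional : ∀ a r b b', (a, r, b) ∈ p → (a, r, b') ∈ p → b = b'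
  col_lt : ∀ a r b, (a, r, b) ∈ p → a < δ.ord
  row_lt : ∀ a r b, (a, r, b) ∈ p → r < γ.ord
  small : #↥p < Cardinal.lift.{1} γ

/-- Compatibility in `Add(γ,δ)`: a common extension exists. -/
def AddCond.Compatible {γ δ : Cardinal.{0}} (p q : AddCond γ δ) : Prop :=
  ∃ r : AddCond γ δ, p.p ⊆ r.p ∧ q.p ⊆ r.p

/-- A condition of the Apter–Shelah forcing `A(γ,δ,X⃗)`: a uniform Cohen condition
(filled up to a common height `ht < γ`) with side conditions `Z`, a set of chosen
ladders from `X` included in the support of the working part. -/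
structure ASCond (γ δ : Cardinal.{0}) (I : Set Ordinal) (X : Ordinal → Set Ordinal) where
  p : Set (Ordinal.{0} × Ordinal.{0} × Bool)
  functional : ∀ a r b b', (a, r, b) ∈ p → (a, r, b') ∈ p → b = b'
  col_lt : ∀ a r b, (a, r, b) ∈ p → a < δ.ord
  small : #↥p < Cardinal.lift.{1} γ
  ht : Ordinal
  ht_lt : ht < γ.ord
  row_lt : ∀ a r b, (a, r, b) ∈ p → r < ht
  uniform : ∀ a r b, (a, r, b) ∈ p → ∀ r' < ht, ∃ b', (a, r', b') ∈ p
  Z : Set Ordinal.{0}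
  Z_sub : Z ⊆ I
  ladder_sub : ∀ α ∈ Z, ∀ ξ ∈ X α, ∃ r b, (ξ, r, b) ∈ p

/-- The working part of an Apter–Shelah condition, as a Cohen condition. -/
def ASCond.toAdd {γ δ : Cardinal.{0}} {I : Set Ordinal} {X : Ordinal → Set Ordinal}
    (c : ASCond γ δ I X) : AddCond γ δ :=
  ⟨c.p, c.functional, c.col_lt, fun a r b h => (c.row_lt a r b h).trans c.ht_lt, c.small⟩

/-- The order of `A(γ,δ,X⃗)`. -/
def ASCond.le {γ δ : Cardinal.{0}} {I : Set Ordinal} {X : Ordinal → Set Ordinal}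
    (q p : ASCond γ δ I X) : Prop :=
  p.p ⊆ q.p ∧ p.Z ⊆ q.Z ∧
    ∀ α ∈ p.Z, ∀ r, p.ht ≤ r → r < q.ht → ∀ b : Bool,
      ∀ ξ ∈ X α, ∃ a ∈ X α, ξ < a ∧ (a, r, b) ∈ q.p

/-- Compatibility in `A(γ,δ,X⃗)`. -/
def ASCond.Compatible {γ δ : Cardinal.{0}} {I : Set Ordinal} {X : Ordinal → Set Ordinal}
    (p q : ASCond γ δ I X) : Prop :=
  ∃ r : ASCond γ δ I X, r.le p ∧ r.le q

/-!
STATEMENT 11.  If the poset `Add(γ,δ)` is `γ⁺`-Knaster and any two uniform conditions of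
equal height with compatible working parts are compatible in `A(γ,δ,X⃗)`, then the
property of being `γ⁺`-Knaster transfers from `Add(γ,δ)` to `A(γ,δ,X⃗)` when all
conditions are normalized to a common height.
-/
theorem knaster_transfers_to_apterShelah (γ δ : Cardinal) (hγ : γ.IsInaccessible)
    (hδ : δ.IsRegular) (hlt : γ < δ)
    (I : Set Ordinal) (hI : I ⊆ Set.Iio δ.ord)
    (X : Ordinal → Set Ordinal) (hX : IsLadderSystem I X)
    (hKnaster : ∀ A : Set (AddCond γ δ), #↥A = Cardinal.lift.{1} (Order.succ γ) →
      ∃ B ⊆ A, #↥B = Cardinal.lift.{1} (Order.succ γ) ∧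
        ∀ p ∈ B, ∀ q ∈ B, AddCond.Compatible p q)
    (htransfer : ∀ p q : ASCond γ δ I X, p.ht = q.ht →
      AddCond.Compatible p.toAdd q.toAdd → ASCond.Compatible p q)
    (A : Set (ASCond γ δ I X)) (hA : #↥A = Cardinal.lift.{1} (Order.succ γ))
    (hht : ∀ p ∈ A, ∀ q ∈ A, ASCond.ht p = ASCond.ht q) :
    ∃ B ⊆ A, #↥B = Cardinal.lift.{1} (Order.succ γ) ∧
      ∀ p ∈ B, ∀ q ∈ B, ASCond.Compatible p q := by
  set κ := Cardinal.lift.{1} (Order.succ γ) with hκ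
  have hκreg : κ.IsRegular := by
    rw [hκ, Cardinal.lift_succ]
    exact Cardinal.isRegular_succ (by simpa using hγ.1.le)
  set f : ASCond γ δ I X → AddCond γ δ := ASCond.toAdd with hf
  by_cases hfib : ∃ b : AddCond γ δ, #↥{a | a ∈ A ∧ f a = b} = κ
  · obtain ⟨b, hb⟩ := hfib
    refine ⟨{a | a ∈ A ∧ f a = b}, fun a ha => ha.1, hb, ?_⟩
    intro p hp q hq
    refine htransfer p q (hht p hp.1 q hq.1) ?_
    have hpq : p.toAdd = q.toAdd := by rw [← hf]; rw [hp.2, hq.2]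
    exact ⟨p.toAdd, subset_rfl, by rw [hpq]⟩
  · -- all fibers are small, so the image has full size
    set S := f '' A with hS
    have hSle : #↥S ≤ κ := by
      rw [← hA]; exact Cardinal.mk_image_le
    have hSeq : #↥S = κ := by
      by_contra hne
      have hSlt : #↥S < κ := lt_of_le_of_ne hSle hne
      have hsub : A ⊆ ⋃ b : ↥S, {a | a ∈ A ∧ f a = b.1} := by
        intro a ha
        exact Set.mem_iUnion.2 ⟨⟨f a, ⟨a, ha, rfl⟩⟩, ha, rfl⟩
      have h1 : #↥A ≤ Cardinal.sum fun b : ↥S => #↥{a | a ∈ A ∧ f a = b.1} :=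
        (Cardinal.mk_le_mk_of_subset hsub).trans Cardinal.mk_iUnion_le_sum_mk
      have h2 : (Cardinal.sum fun b : ↥S => #↥{a | a ∈ A ∧ f a = b.1}) < κ := by
        refine Cardinal.sum_lt_of_isRegular hκreg hSlt ?_
        intro b
        refine lt_of_le_of_ne ?_ fun h => hfib ⟨b.1, h⟩
        rw [← hA]
        exact Cardinal.mk_le_mk_of_subset fun a ha => ha.1
      exact absurd (hA ▸ h1) (not_le.2 h2)
    obtain ⟨B0, hB0sub, hB0card, hB0comp⟩ := hKnaster S hSeq
    have hsec : ∀ b : ↥B0, ∃ a, a ∈ A ∧ f a = b.1 := by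
      intro b
      obtain ⟨a, ha, hfa⟩ := hB0sub b.2
      exact ⟨a, ha, hfa⟩
    choose g hgA hgf using hsec
    have hginj : Function.Injective g := by
      intro b b' h
      have : (b : AddCond γ δ) = b' := by rw [← hgf b, ← hgf b', h]
      exact Subtype.ext this
    refine ⟨Set.range g, ?_, ?_, ?_⟩
    · rintro a ⟨b, rfl⟩; exact hgA b
    · rw [Cardinal.mk_range_eq g hginj, hB0card]
    · rintro p ⟨b, rfl⟩ q ⟨b', rfl⟩
      refine htransfer _ _ (hht _ (hgA b) _ (hgA b')) ?_
      have h1 : (g b).toAdd ∈ B0 := by rw [← hf, hgf b]; exact b.2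
      have h2 : (g b').toAdd ∈ B0 := by rw [← hf, hgf b']; exact b'.2
      exact hB0comp _ h1 _ h2
end
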